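/- arXiv:1503.06833 — 5 statements merged into one kernel-verified Lean document; each statement's English description precedes it below -/
import Mathlib

section
/- Let q(z) be a monic polynomial of degree p with complex coefficients and set r = |q(1)| with r ≥ 1. If every root ζ of q satisfies |ζ| ≤ r^{1/p} − 1, then all roots are equal to 1 − r^{1/p}, i.e. q(z) = (z − (1 − r^{1/p}))^p. -/
open Polynomial

theorem stmt2 (p : ℕ) (hp : 1 ≤ p) (q : Polynomial ℂ)
    (hmonic : q.Monic) (hdeg : q.natDegree = p)
    (r : ℝ) (hr : r = ‖q.eval 1‖) (hr1 : 1 ≤ r)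
    (hroots : ∀ z : ℂ, q.IsRoot z → ‖z‖ ≤ r ^ ((p : ℝ)⁻¹) - 1) :
    q = (X - C ((1 : ℂ) - ((r ^ ((p : ℝ)⁻¹) : ℝ) : ℂ))) ^ p := by
  have hr0 : (0:ℝ) ≤ r := by linarith
  set b : ℝ := r ^ ((p : ℝ)⁻¹) with hbdef
  have hb1 : 1 ≤ b := Real.one_le_rpow hr1 (by positivity)
  have hbp : b ^ p = r := by
    rw [hbdef, ← Real.rpow_natCast (r ^ ((p:ℝ)⁻¹)) p, ← Real.rpow_mul hr0,
      inv_mul_cancel₀ (by positivity : (p:ℝ) ≠ 0), Real.rpow_one]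
  have hsplits : Splits q := IsAlgClosed.splits q
  have hq : q = (q.roots.map fun a => X - C a).prod :=
    hsplits.eq_prod_roots_of_monic hmonic
  have hcard : q.roots.card = p := by
    rw [← hdeg]; exact (splits_iff_card_roots.mp hsplits)
  -- norms
  set b' : NNReal := ⟨b, by linarith⟩ with hb'def
  have hprod : (q.roots.map fun z => ‖(1:ℂ) - z‖₊).prod = b' ^ p := by
    have h1 : q.eval 1 = (q.roots.map fun z => (1:ℂ) - z).prod := by
      conv_lhs => rw [hq]
      rw [eval_multiset_prod, Multiset.map_map]
      simp
    have h2 : ‖q.eval 1‖₊ = (q.roots.map fun z => ‖(1:ℂ) - z‖₊).prod := by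
      have key : ∀ m : Multiset ℂ, ‖m.prod‖₊ = (m.map fun x => ‖x‖₊).prod := by
        intro m
        induction m using Multiset.induction with
        | empty => simp
        | cons a s ih => simp [nnnorm_mul, ih]
      rw [h1, key, Multiset.map_map]
      rfl
    have h3 : ‖q.eval 1‖₊ = b' ^ p := by
      ext
      push_cast
      rw [← hbp] at hr
      exact hr.symm
    rw [← h2, h3]
  have hle : ∀ z ∈ q.roots, ‖(1:ℂ) - z‖₊ ≤ b' := by
    intro z hz
    have hzr : ‖z‖ ≤ b - 1 := hroots z ((mem_roots (hmonic.ne_zero)).mp hz)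
    have h := norm_sub_le (1:ℂ) z
    simp only [norm_one] at h
    have : ‖(1:ℂ) - z‖ ≤ b := by
      linarith
    exact this
  -- equality for each factor
  have heq : ∀ z ∈ q.roots, ‖(1:ℂ) - z‖₊ = b' := by
    intro z hz
    by_contra hne
    have hlt : ‖(1:ℂ) - z‖₊ < b' := lt_of_le_of_ne (hle z hz) hne
    obtain ⟨t, ht⟩ := Multiset.exists_cons_of_mem hz
    have htcard : t.card = p - 1 := by
      have := hcard
      rw [ht, Multiset.card_cons] at this
      omega
    have htle : (t.map fun w => ‖(1:ℂ) - w‖₊).prod ≤ b' ^ (p - 1) := by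
      rw [← htcard, ← Multiset.card_map (fun w => ‖(1:ℂ) - w‖₊) t]
      apply Multiset.prod_le_pow_card
      intro x hx
      obtain ⟨w, hw, rfl⟩ := Multiset.mem_map.mp hx
      exact hle w (by rw [ht]; exact Multiset.mem_cons_of_mem hw)
    have hb'pos : 0 < b' ^ (p-1) := pow_pos (lt_of_lt_of_le zero_lt_one (by exact_mod_cast hb1)) _
    have : (q.roots.map fun w => ‖(1:ℂ) - w‖₊).prod < b' ^ p := by
      rw [ht, Multiset.map_cons, Multiset.prod_cons]
      calc ‖(1:ℂ) - z‖₊ * (t.map fun w => ‖(1:ℂ) - w‖₊).prod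
          ≤ ‖(1:ℂ) - z‖₊ * b' ^ (p-1) := by gcongr
        _ < b' * b' ^ (p-1) := by
            apply mul_lt_mul_of_pos_right hlt hb'pos
        _ = b' ^ p := by
            rw [← pow_succ']
            congr 1
            omega
    rw [hprod] at this
    exact lt_irrefl _ this
  -- now each root equals 1 - b
  have hroot_eq : ∀ z ∈ q.roots, z = (1 : ℂ) - (b : ℂ) := by
    intro z hz
    have h1 : ‖(1:ℂ) - z‖ = b := by
      have := heq z hz
      have := congrArg (fun x : NNReal => (x : ℝ)) this
      exact this
    have h2 : ‖z‖ ≤ b - 1 := hroots z ((mem_roots (hmonic.ne_zero)).mp hz)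
    have h3 : b - 1 ≤ ‖z‖ := by
      have h := norm_sub_le (1:ℂ) z
      simp only [norm_one] at h
      linarith
    have habs : ‖z‖ = b - 1 := le_antisymm h2 h3
    -- squared equations
    have e1 : (1 - z.re)^2 + z.im^2 = b^2 := by
      have h : ‖1 - z‖ ^ 2 = b ^ 2 := by rw [h1]
      rw [Complex.sq_norm, Complex.normSq_apply] at h
      rw [Complex.sub_re, Complex.sub_im] at h; simp at h; nlinarith [h]
    have e2 : z.re^2 + z.im^2 = (b-1)^2 := by
      have h : ‖z‖ ^ 2 = (b-1) ^ 2 := by rw [habs]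
      rw [Complex.sq_norm, Complex.normSq_apply] at h
      nlinarith [h]
    have hre : z.re = 1 - b := by nlinarith
    have him : z.im = 0 := by nlinarith
    apply Complex.ext <;> simp [hre, him]
  have hrepl : q.roots = Multiset.replicate p ((1:ℂ) - (b:ℂ)) := by
    rw [Multiset.eq_replicate]
    exact ⟨hcard, hroot_eq⟩
  rw [hq, hrepl, Multiset.map_replicate, Multiset.prod_replicate]
end

section
/- For p = 3 the real-coefficient assumption in the root-radius lower bound is necessary: the complex monic cubic u(z) = (z − (1 − (1/2)e^{iπ/3}))^3 satisfies u(1) = −1/8 < 0, yet the maximum modulus of its roots is strictly less than 1. -/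
open Polynomial

theorem stmt4 (ζ : ℂ) (hζ : ζ = 1 - (1/2) * Complex.exp (Real.pi * Complex.I / 3))
    (u : Polynomial ℂ) (hu : u = (X - C ζ) ^ 3) :
    u.eval 1 = -(1/8) ∧ ∀ z : ℂ, u.IsRoot z → ‖z‖ < 1 := by
  have hexp : Complex.exp (Real.pi * Complex.I / 3)
      = (1/2 : ℂ) + (Real.sqrt 3 / 2 : ℝ) * Complex.I := by
    have h1 : (Real.pi : ℂ) * Complex.I / 3 = ((Real.pi / 3 : ℝ) : ℂ) * Complex.I := by
      push_cast; ring
    rw [h1, Complex.exp_mul_I, ← Complex.ofReal_cos, ← Complex.ofReal_sin,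
      Real.cos_pi_div_three, Real.sin_pi_div_three]
    push_cast; ring
  have hζ' : ζ = Complex.mk (3/4) (-(Real.sqrt 3 / 4)) := by
    rw [hζ, hexp]
    apply Complex.ext <;> simp <;> ring
  have hs : Real.sqrt 3 ^ 2 = 3 := Real.sq_sqrt (by norm_num)
  constructor
  · rw [hu, hζ']
    simp only [eval_pow, eval_sub, eval_X, eval_C]
    apply Complex.ext
    · simp [pow_succ, Complex.mul_re, Complex.mul_im]
      ring_nf
      linear_combination (-3/64 : ℝ) * hs
    · simp [pow_succ, Complex.mul_re, Complex.mul_im]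
      ring_nf
      linear_combination (-(Real.sqrt 3)/64 : ℝ) * hs
  · intro z hz
    have hroot : z = ζ := by
      rw [hu] at hz
      simpa [IsRoot, sub_eq_zero] using hz
    rw [hroot, hζ']
    have habs : ‖(Complex.mk (3/4) (-(Real.sqrt 3 / 4)) : ℂ)‖ ^ 2 = 3/4 := by
      rw [Complex.sq_norm, Complex.normSq_mk]
      nlinarith [hs]
    nlinarith [norm_nonneg (Complex.mk (3/4) (-(Real.sqrt 3 / 4)))]
end

section
/- Let 0 < μ ≤ L and p a positive integer, and let κ = L/μ. Then for every real ν ∈ (−2^p/L, 0) with both −νμ and −νL in [0, 2^p], max{ |(−νμ)^{1/p} − 1|, |(−νL)^{1/p} − 1| } ≥ (κ^{1/p} − 1)/(κ^{1/p} + 1). -/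
theorem stmt6 (μ L : ℝ) (hμ : 0 < μ) (hμL : μ ≤ L) (p : ℕ) (hp : 1 ≤ p)
    (ν : ℝ) (hν1 : -2 ^ p / L < ν) (hν2 : ν < 0)
    (h1 : -ν * μ ≤ 2 ^ p) (h2 : -ν * L ≤ 2 ^ p) :
    ((L / μ) ^ ((p : ℝ)⁻¹) - 1) / ((L / μ) ^ ((p : ℝ)⁻¹) + 1) ≤
      max |(-ν * μ) ^ ((p : ℝ)⁻¹) - 1| |(-ν * L) ^ ((p : ℝ)⁻¹) - 1| := by
  set r : ℝ := (p : ℝ)⁻¹ with hrdef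
  set a : ℝ := (-ν * μ) ^ r with hadef
  set b : ℝ := (-ν * L) ^ r with hbdef
  set k : ℝ := (L / μ) ^ r with hkdef
  have hp0 : (0 : ℝ) < p := by exact_mod_cast Nat.lt_of_lt_of_le Nat.zero_lt_one hp
  have hr0 : 0 < r := by positivity
  have hμν : 0 < -ν * μ := by nlinarith
  have ha0 : 0 < a := Real.rpow_pos_of_pos hμν r
  have hk1 : 1 ≤ k := Real.one_le_rpow ((one_le_div hμ).mpr hμL) hr0.le
  have hk0 : (0 : ℝ) < k + 1 := by linarith
  have hmul : b = a * k := by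
    rw [hadef, hbdef, hkdef, ← Real.mul_rpow hμν.le (div_nonneg (by linarith) hμ.le)]
    congr 1
    field_simp
  by_contra h
  push_neg at h
  have ha1 := abs_lt.mp (lt_of_le_of_lt (le_max_left _ _) h)
  have hb1 := abs_lt.mp (lt_of_le_of_lt (le_max_right _ _) h)
  have hA : -(k - 1) < (a - 1) * (k + 1) := by
    have := ha1.1
    rw [← neg_div] at this
    rw [div_lt_iff₀ hk0] at this
    linarith
  have hB : (b - 1) * (k + 1) < k - 1 := by
    have := hb1.2
    rw [lt_div_iff₀ hk0] at this
    linarith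
  nlinarith [mul_pos ha0 hk0]
end

section
/- With E as above and α^0 = (1/√2, −1/√2, 0, …, 0) ∈ ℝ^n, for every K ≥ 0 one has ‖E^K α^0‖ = (1 − 1/(2/λ + n))^K, and consequently ‖E^K α^0‖ ≥ exp(−K/(2/λ + n − 1)). -/
open Matrix

theorem stmt13 (n : ℕ) (hn : 2 ≤ n) (lam : ℝ) (hlam : 0 < lam)
    (u : Fin n → Fin n → ℝ)
    (hu : ∀ i j, u i j = if j = i then 1 else 2 / (2 + lam * n))
    (E : Matrix (Fin n) (Fin n) ℝ)
    (hE : E = 1 - (1 / (n : ℝ)) • ∑ i : Fin n, Matrix.vecMulVec (Pi.single i 1) (u i))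
    (α0 : EuclideanSpace ℝ (Fin n))
    (hα0 : ∀ j : Fin n, α0 j =
      if (j : ℕ) = 0 then 1 / Real.sqrt 2
      else if (j : ℕ) = 1 then -(1 / Real.sqrt 2) else 0)
    (K : ℕ) :
    ‖Matrix.toEuclideanLin (E ^ K) α0‖ = (1 - 1 / (2 / lam + n)) ^ K ∧
    Real.exp (-(K : ℝ) / (2 / lam + n - 1)) ≤ ‖Matrix.toEuclideanLin (E ^ K) α0‖ := by
  have hn0 : (0:ℝ) < n := by positivity
  have hn2 : (2:ℝ) ≤ n := by exact_mod_cast hn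
  set c : ℝ := 2 / (2 + lam * n) with hc
  have hden : (0:ℝ) < 2 + lam * n := by positivity
  set μ : ℝ := 1 - 1 / (2 / lam + n) with hμ
  have hx1 : (1:ℝ) < 2 / lam + n := by nlinarith [div_pos (by norm_num : (0:ℝ)<2) hlam]
  have hx0 : (0:ℝ) < 2 / lam + n := by linarith
  have hμpos : 0 < μ := by
    rw [hμ, sub_pos, div_lt_one hx0]; linarith
  have hμlt : μ ≤ 1 := by
    rw [hμ]; have : 0 < 1 / (2 / lam + n) := by positivity
    linarith
  -- the vector as a plain function
  set v : Fin n → ℝ := fun j => α0 j with hv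
  have i0 : Fin n := ⟨0, by omega⟩
  have hsum : ∑ j, v j = 0 := by
    have hsub : (Finset.univ : Finset (Fin n)).sum v =
        ∑ j ∈ ({⟨0, by omega⟩, ⟨1, by omega⟩} : Finset (Fin n)), v j := by
      refine (Finset.sum_subset (Finset.subset_univ _) ?_).symm
      intro j _ hj
      simp only [Finset.mem_insert, Finset.mem_singleton] at hj
      push_neg at hj
      show α0 j = 0
      rw [hα0 j, if_neg (fun h => hj.1 (Fin.ext h)), if_neg (fun h => hj.2 (Fin.ext h))]
    rw [hsub, Finset.sum_pair (by intro h; exact absurd (Fin.mk.injEq .. ▸ h) (by simp))]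
    show α0 _ + α0 _ = 0
    simp [hα0]
  have hsumsq : ∑ j, v j ^ 2 = 1 := by
    have hsub : ∑ j, v j ^ 2 =
        ∑ j ∈ ({⟨0, by omega⟩, ⟨1, by omega⟩} : Finset (Fin n)), v j ^ 2 := by
      refine (Finset.sum_subset (Finset.subset_univ _) ?_).symm
      intro j _ hj
      simp only [Finset.mem_insert, Finset.mem_singleton] at hj
      push_neg at hj
      show α0 j ^ 2 = 0
      rw [hα0 j, if_neg (fun h => hj.1 (Fin.ext h)), if_neg (fun h => hj.2 (Fin.ext h))]
      norm_num
    rw [hsub, Finset.sum_pair (by intro h; exact absurd (Fin.mk.injEq .. ▸ h) (by simp))]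
    show α0 _ ^ 2 + α0 _ ^ 2 = 1
    simp only [hα0]
    norm_num
  -- eigenvector equation
  have hmulvec : E *ᵥ v = μ • v := by
    funext j
    have hudot : u j ⬝ᵥ v = (1 - c) * v j := by
      have : ∀ k, u j k * v k = (if k = j then (1 - c) * v k else 0) + c * v k := by
        intro k
        rw [hu j k]
        by_cases h : k = j <;> simp [h] <;> ring
      rw [dotProduct]
      simp_rw [this]
      rw [Finset.sum_add_distrib, Finset.sum_ite_eq' Finset.univ j, ← Finset.mul_sum, hsum]
      simp
    have hsumrow : ((∑ i : Fin n, Matrix.vecMulVec (Pi.single i 1) (u i)) *ᵥ v) j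
        = (1 - c) * v j := by
      rw [show ((∑ i : Fin n, Matrix.vecMulVec (Pi.single i 1) (u i)) *ᵥ v) j
          = ∑ i : Fin n, (Matrix.vecMulVec (Pi.single i 1) (u i) *ᵥ v) j by
        simp only [Matrix.mulVec, dotProduct, Matrix.sum_apply, Finset.sum_mul]
        rw [Finset.sum_comm]]
      have : ∀ i : Fin n, (Matrix.vecMulVec (Pi.single i 1) (u i) *ᵥ v) j
          = (Pi.single i 1 : Fin n → ℝ) j * (u i ⬝ᵥ v) := by
        intro i
        simp [Matrix.mulVec, Matrix.vecMulVec, dotProduct, Finset.mul_sum, mul_assoc]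
      simp_rw [this]
      rw [Finset.sum_eq_single j]
      · simp [hudot]
      · intro b _ hb; simp [Pi.single_eq_of_ne' hb]
      · simp
    rw [hE]
    rw [Matrix.sub_mulVec, Matrix.smul_mulVec]
    simp only [Matrix.one_mulVec, Pi.sub_apply, Pi.smul_apply, hsumrow, smul_eq_mul]
    have hμeq : μ = 1 - (1/(n:ℝ)) * (1 - c) := by
      rw [hμ, hc]
      have h1 : (1:ℝ) - 2 / (2 + lam * n) = lam * n / (2 + lam * n) := by
        field_simp; ring
      rw [h1]
      have h2 : (2:ℝ) / lam + n = (2 + lam * n) / lam := by field_simp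
      rw [h2]
      rw [one_div_div]
      field_simp
    rw [hμeq]; ring
  have hmulvecK : (E ^ K) *ᵥ v = μ ^ K • v := by
    induction K with
    | zero => simp
    | succ k ih =>
      rw [pow_succ, ← Matrix.mulVec_mulVec, hmulvec, Matrix.mulVec_smul, ih,
        smul_smul, ← pow_succ']
  have hnormv : ‖α0‖ = 1 := by
    rw [EuclideanSpace.norm_eq]
    have : ∀ j, ‖α0 j‖ ^ 2 = v j ^ 2 := by intro j; rw [hv]; rw [Real.norm_eq_abs, sq_abs]
    simp_rw [this, hsumsq, Real.sqrt_one]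
  have happ : Matrix.toEuclideanLin (E ^ K) α0 = (μ ^ K : ℝ) • α0 := by
    apply (WithLp.equiv 2 (Fin n → ℝ)).injective
    change (E ^ K) *ᵥ (WithLp.equiv 2 (Fin n → ℝ)) α0 = _
    have : (WithLp.equiv 2 (Fin n → ℝ)) α0 = v := rfl
    rw [this, hmulvecK]
    rfl
  have hnorm : ‖Matrix.toEuclideanLin (E ^ K) α0‖ = μ ^ K := by
    rw [happ, norm_smul, hnormv, mul_one, Real.norm_eq_abs, abs_of_pos (pow_pos hμpos K)]
  refine ⟨hnorm, ?_⟩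
  rw [hnorm]
  have key : Real.exp (-(1 / (2 / lam + n - 1))) ≤ μ := by
    have h1 : 1 + 1 / (2 / lam + n - 1) ≤ Real.exp (1 / (2 / lam + n - 1)) := by
      have := Real.add_one_le_exp (1 / (2 / lam + n - 1)); linarith
    have hx1' : (0:ℝ) < 2 / lam + n - 1 := by linarith
    have h2 : Real.exp (-(1 / (2 / lam + n - 1))) = (Real.exp (1 / (2 / lam + n - 1)))⁻¹ := by
      rw [← Real.exp_neg]
    rw [h2]
    rw [inv_le_comm₀ (Real.exp_pos _) hμpos]
    calc μ⁻¹ = (2 / lam + n) / (2 / lam + n - 1) := by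
          rw [hμ]
          rw [show (1:ℝ) - 1 / (2 / lam + n) = (2 / lam + n - 1) / (2 / lam + n) by
            field_simp]
          rw [inv_div]
      _ = 1 + 1 / (2 / lam + n - 1) := by
          rw [one_add_div (ne_of_gt hx1')]
          congr 1
          ring
      _ ≤ Real.exp (1 / (2 / lam + n - 1)) := h1
  calc Real.exp (-(K : ℝ) / (2 / lam + n - 1))
      = (Real.exp (-(1 / (2 / lam + n - 1)))) ^ K := by
        rw [← Real.exp_nat_mul]; ring_nf
    _ ≤ μ ^ K := pow_le_pow_left₀ (Real.exp_pos _).le key K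
end

section
/- Let 0 < μ ≤ L, p ≥ 1, and let B be the 2×2 matrix with diagonal entries (L+μ)/2 and off-diagonal entries (L−μ)/2. Then the spectrum of B is {μ, L}, and for any diagonal matrix N = diag(α, β), the eigenvalues σ_{1,2} of −NB satisfy max{|σ_1^{1/p} − 1|, |σ_2^{1/p} − 1|} ≥ max{|(−νμ)^{1/p} − 1|, |(−νL)^{1/p} − 1|} where ν = (α+β)/2, provided σ_1, σ_2 ≥ 0. -/
lemma aux_abs (a b x q : ℝ) (ha : 0 ≤ a) (hax : a ≤ x) (hxb : x ≤ b) (hq : 0 ≤ q) :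
    |x ^ q - 1| ≤ max |a ^ q - 1| |b ^ q - 1| := by
  have h1 : a ^ q ≤ x ^ q := Real.rpow_le_rpow ha hax hq
  have h2 : x ^ q ≤ b ^ q := Real.rpow_le_rpow (ha.trans hax) hxb hq
  rcases le_total 1 (x ^ q) with h | h
  · refine le_max_of_le_right ?_
    rw [abs_of_nonneg (by linarith)]
    have := le_abs_self (b ^ q - 1)
    linarith
  · refine le_max_of_le_left ?_
    rw [abs_of_nonpos (by linarith)]
    have := neg_le_abs (a ^ q - 1)
    linarith

theorem stmt17 (μ L : ℝ) (hμ : 0 < μ) (hμL : μ ≤ L) (p : ℕ) (hp : 1 ≤ p)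
    (B : Matrix (Fin 2) (Fin 2) ℝ)
    (hB : B = Matrix.of ![![(L + μ) / 2, (L - μ) / 2], ![(L - μ) / 2, (L + μ) / 2]]) :
    spectrum ℝ B = {μ, L} ∧
    ∀ α β : ℝ,
      (fun σ1 σ2 ν =>
        0 ≤ σ1 → 0 ≤ σ2 →
          max |(-ν * μ) ^ ((p : ℝ)⁻¹) - 1| |(-ν * L) ^ ((p : ℝ)⁻¹) - 1| ≤
            max |σ1 ^ ((p : ℝ)⁻¹) - 1| |σ2 ^ ((p : ℝ)⁻¹) - 1|)
        (-(α + β) * (L + μ) / 4 +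
          Real.sqrt (((α + β) * (L + μ) / 4) ^ 2 - α * β * L * μ))
        (-(α + β) * (L + μ) / 4 -
          Real.sqrt (((α + β) * (L + μ) / 4) ^ 2 - α * β * L * μ))
        ((α + β) / 2) := by
  have hL : 0 < L := hμ.trans_le hμL
  constructor
  · subst hB
    ext x
    simp only [spectrum.mem_iff, Set.mem_insert_iff, Set.mem_singleton_iff,
      Matrix.isUnit_iff_isUnit_det, isUnit_iff_ne_zero, not_not]
    have hdet : (algebraMap ℝ (Matrix (Fin 2) (Fin 2) ℝ) x -
        Matrix.of ![![(L + μ) / 2, (L - μ) / 2], ![(L - μ) / 2, (L + μ) / 2]]).det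
        = (x - μ) * (x - L) := by
      rw [Matrix.det_fin_two]
      simp [Matrix.algebraMap_matrix_apply]
      ring
    rw [hdet, mul_eq_zero, sub_eq_zero, sub_eq_zero]
  · intro α β
    intro h1 h2
    set r := Real.sqrt (((α + β) * (L + μ) / 4) ^ 2 - α * β * L * μ) with hr
    have hrnn : 0 ≤ r := Real.sqrt_nonneg _
    have hdisc : 0 ≤ ((α + β) * (L + μ) / 4) ^ 2 - α * β * L * μ := by
      nlinarith [sq_nonneg ((α + β) * (L - μ)), sq_nonneg (α - β),
        mul_nonneg (sq_nonneg (α - β)) (mul_pos hL hμ).le]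
    have hrsq : r ^ 2 = ((α + β) * (L + μ) / 4) ^ 2 - α * β * L * μ :=
      Real.sq_sqrt hdisc
    have hν : α + β ≤ 0 := by nlinarith
    -- key: (α+β)*(μ-L)/4 ≤ r
    have hkey : (α + β) * (μ - L) / 4 ≤ r := by
      have hnn : 0 ≤ (α + β) * (μ - L) / 4 := by nlinarith
      have hsq : ((α + β) * (μ - L) / 4) ^ 2 ≤ r ^ 2 := by
        rw [hrsq]; nlinarith [mul_nonneg (sq_nonneg (α - β)) (mul_pos hL hμ).le]
      nlinarith
    have hq : (0:ℝ) ≤ (p : ℝ)⁻¹ := by positivity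
    have c1 : -(α + β) * (L + μ) / 4 - r ≤ -((α + β) / 2) * μ := by nlinarith
    have c2 : -((α + β) / 2) * μ ≤ -((α + β) / 2) * L := by nlinarith
    have c3 : -((α + β) / 2) * L ≤ -(α + β) * (L + μ) / 4 + r := by nlinarith
    have b1 : |(-((α + β) / 2) * μ) ^ ((p : ℝ)⁻¹) - 1| ≤
        max |(-(α + β) * (L + μ) / 4 - r) ^ ((p : ℝ)⁻¹) - 1|
            |(-(α + β) * (L + μ) / 4 + r) ^ ((p : ℝ)⁻¹) - 1| :=
      aux_abs _ _ _ _ h2 c1 (le_trans c2 c3) hq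
    have b2 : |(-((α + β) / 2) * L) ^ ((p : ℝ)⁻¹) - 1| ≤
        max |(-(α + β) * (L + μ) / 4 - r) ^ ((p : ℝ)⁻¹) - 1|
            |(-(α + β) * (L + μ) / 4 + r) ^ ((p : ℝ)⁻¹) - 1| :=
      aux_abs _ _ _ _ h2 (le_trans c1 c2) c3 hq
    rw [max_comm] at b1 b2
    exact max_le b1 b2
end
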